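/- Let F be a field, N, r, d natural numbers with 1 ≤ r and r ≤ d, and let j, b : Fin N → ℕ be strictly monotone functions with j k ≤ r − 1 and b k ≤ d − r for all k. For a permutation σ of Fin N set S(σ) := ∑_{k} b k · j (σ k), and let P : Polynomial F be the generalized Vandermonde polynomial P := ∑_{σ ∈ Equiv.Perm (Fin N)} ((Equiv.Perm.sign σ : ℤ) : F) • X ^ S(σ). Then P ≠ 0, the natural degree of P equals S(1) = ∑_{k} b k · j k, and the set of nonzero roots {x : F | x ≠ 0 ∧ P.eval x = 0} is finite of cardinality at most Nat.choose r 2 · (d − r). -/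

import Mathlib

open Polynomial

theorem stmt_15 (F : Type*) [Field F] (N r d : ℕ) (hr : 1 ≤ r) (hrd : r ≤ d)
    (j b : Fin N → ℕ) (hj : StrictMono j) (hb : StrictMono b)
    (hjr : ∀ k, j k ≤ r - 1) (hbd : ∀ k, b k ≤ d - r)
    (P : Polynomial F)
    (hP : P = ∑ σ : Equiv.Perm (Fin N),
      (((Equiv.Perm.sign σ : ℤ) : F)) • (Polynomial.X : Polynomial F) ^ (∑ k, b k * j (σ k))) :
    P ≠ 0 ∧ P.natDegree = ∑ k, b k * j k ∧
      {x : F | x ≠ 0 ∧ P.eval x = 0}.Finite ∧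
      Set.ncard {x : F | x ≠ 0 ∧ P.eval x = 0} ≤ Nat.choose r 2 * (d - r) := by
  classical
  set S : Equiv.Perm (Fin N) → ℕ := fun σ => ∑ k, b k * j (σ k) with hSdef
  have hS1 : S 1 = ∑ k, b k * j k := by simp [hSdef]
  -- strict rearrangement: S σ < S 1 for σ ≠ 1
  have hlt : ∀ σ : Equiv.Perm (Fin N), σ ≠ 1 → S σ < S 1 := by
    intro σ hσ
    have h1 : Monovary (fun k => (b k : ℤ)) (fun k => (j k : ℤ)) := by
      intro i k h
      simp only at h ⊢
      have : j i < j k := by exact_mod_cast h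
      exact_mod_cast hb.monotone (hj.lt_iff_lt.mp this).le
    have h2 : ¬ Monovary (fun k => (b k : ℤ)) ((fun k => (j k : ℤ)) ∘ σ) := by
      intro h
      apply hσ
      have hsm : StrictMono σ := by
        intro i k hik
        rcases lt_trichotomy (σ i) (σ k) with h' | h' | h'
        · exact h'
        · exact absurd (σ.injective h') hik.ne
        · have hji : ((fun k => (j k : ℤ)) ∘ σ) k < ((fun k => (j k : ℤ)) ∘ σ) i := by
            simp only [Function.comp]
            exact_mod_cast hj h'
          have := h hji
          simp only at this
          have hbik : (b i : ℤ) < b k := by exact_mod_cast hb hik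
          omega
      have : (σ : Fin N → Fin N) = id := by
        refine (hsm.range_inj strictMono_id).mp ?_
        simp [Set.range_eq_univ.mpr σ.surjective, Set.range_id]
      exact Equiv.ext fun x => congrFun this x
    have := (h1.sum_mul_comp_perm_lt_sum_mul_iff (σ := σ)).mpr h2
    rw [hS1, hSdef]
    exact_mod_cast this
  have hle : ∀ σ : Equiv.Perm (Fin N), S σ ≤ S 1 := by
    intro σ
    by_cases h : σ = 1
    · simp [h]
    · exact (hlt σ h).le
  -- bound on S 1
  have hjsum : ∑ k, j k ≤ Nat.choose r 2 := by
    have hsub : Finset.image j Finset.univ ⊆ Finset.range r := by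
      intro x hx
      simp only [Finset.mem_image] at hx
      obtain ⟨k, _, rfl⟩ := hx
      exact Finset.mem_range.mpr (lt_of_le_of_lt (hjr k) (by omega))
    calc ∑ k, j k = ∑ x ∈ Finset.image j Finset.univ, x :=
          (Finset.sum_image (g := j) (f := fun x => x) (fun x _ y _ h => hj.injective h)).symm
      _ ≤ ∑ x ∈ Finset.range r, x := Finset.sum_le_sum_of_subset hsub
      _ = r * (r - 1) / 2 := Finset.sum_range_id r
      _ = Nat.choose r 2 := (Nat.choose_two_right r).symm
  have hS1le : S 1 ≤ Nat.choose r 2 * (d - r) := by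
    rw [hS1]
    calc ∑ k, b k * j k ≤ ∑ k, (d - r) * j k :=
          Finset.sum_le_sum (fun k _ => Nat.mul_le_mul_right _ (hbd k))
      _ = (d - r) * ∑ k, j k := by rw [Finset.mul_sum]
      _ ≤ (d - r) * Nat.choose r 2 := Nat.mul_le_mul_left _ hjsum
      _ = Nat.choose r 2 * (d - r) := Nat.mul_comm _ _
  -- coefficient of P at S 1 is 1
  have hcoeff : P.coeff (S 1) = 1 := by
    rw [hP, Polynomial.finset_sum_coeff]
    rw [Finset.sum_eq_single (1 : Equiv.Perm (Fin N))]
    · simp [hS1]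
    · intro σ _ hσ
      rw [Polynomial.coeff_smul, Polynomial.coeff_X_pow, if_neg (hlt σ hσ).ne']
      simp
    · simp
  have hPne : P ≠ 0 := fun h => by simp [h] at hcoeff
  have hdegle : P.natDegree ≤ S 1 := by
    rw [hP]
    refine Polynomial.natDegree_sum_le_of_forall_le _ _ (fun σ _ => ?_)
    refine le_trans (Polynomial.natDegree_smul_le _ _) ?_
    simpa using hle σ
  have hdeg : P.natDegree = S 1 :=
    le_antisymm hdegle (Polynomial.le_natDegree_of_ne_zero (by rw [hcoeff]; exact one_ne_zero))
  -- roots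
  have hsub : {x : F | x ≠ 0 ∧ P.eval x = 0} ⊆ ↑P.roots.toFinset := by
    intro x hx
    simp only [Multiset.mem_toFinset, Finset.coe_sort_coe, Finset.mem_coe]
    exact (Polynomial.mem_roots hPne).mpr (by exact hx.2)
  have hfin : {x : F | x ≠ 0 ∧ P.eval x = 0}.Finite :=
    Set.Finite.subset (P.roots.toFinset : Finset F).finite_toSet hsub
  refine ⟨hPne, by rw [hdeg, hS1], hfin, ?_⟩
  calc Set.ncard {x : F | x ≠ 0 ∧ P.eval x = 0}
      ≤ Set.ncard (↑P.roots.toFinset : Set F) :=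
        Set.ncard_le_ncard hsub (P.roots.toFinset : Finset F).finite_toSet
    _ = P.roots.toFinset.card := Set.ncard_coe_finset _
    _ ≤ Multiset.card P.roots := P.roots.toFinset_card_le
    _ ≤ P.natDegree := Polynomial.card_roots' P
    _ ≤ Nat.choose r 2 * (d - r) := hdeg ▸ hS1le
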